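/- For every fixed t > 0, lim_{α→∞} ∫₀^t ∫₀^s F_α(s−r) (4π(s−r))^{−1/2} dr ds = 0. Consequently, the variance (4/3)(χ(ρ)/√π) t^{3/2} + 2χ(ρ) ∫₀^t ∫₀^s F_α(s−r)(4π(s−r))^{−1/2} dr ds of the limiting occupation-time process Γ_α at the slow bond converges, as α → ∞, to the variance (4/3)(χ(ρ)/√π) t^{3/2} of Γ_∞. -/

import Mathlib

open MeasureTheory Real Filter

/-- `F_α(t) = (1/(2t)) ∫₀^∞ z e^{−z²/(4t) − 2αz} dz`, appearing in the variance of the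
limiting occupation-time process of the slow-bond exclusion process at `β = 1`. -/
noncomputable def Falpha (α t : ℝ) : ℝ :=
  (1 / (2 * t)) * ∫ z in Set.Ioi (0:ℝ), z * Real.exp (-z ^ 2 / (4 * t) - 2 * α * z)

/-- An elementary bound `e^{-x} ≤ x^{-p}` for `0 < p ≤ 1`, `0 < x`. -/
lemma exp_neg_le_rpow' {p x : ℝ} (hp0 : 0 < p) (hp1 : p ≤ 1) (hx : 0 < x) :
    Real.exp (-x) ≤ x ^ (-p) := by
  rw [Real.exp_neg, Real.rpow_neg hx.le]
  have h2 : x ^ p ≤ Real.exp x := by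
    rcases le_total x 1 with h | h
    · exact (Real.rpow_le_one hx.le h hp0.le).trans (by linarith [Real.add_one_le_exp x])
    · calc x ^ p ≤ x ^ (1:ℝ) := Real.rpow_le_rpow_of_exponent_le h hp1
        _ = x := Real.rpow_one x
        _ ≤ Real.exp x := by linarith [Real.add_one_le_exp x]
  exact inv_anti₀ (Real.rpow_pos_of_pos hx p) h2

lemma alg' (α τ z : ℝ) (hα : 0 < α) (hτ : 0 < τ) (hz : 0 < z) :
    z * ((z ^ 2 / (8 * τ)) ^ (-(1/4):ℝ) * (2 * α * z) ^ (-(1/2):ℝ))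
      = (8 * τ) ^ ((1:ℝ)/4) * (2 * α) ^ (-(1/2):ℝ) := by
  rw [Real.div_rpow (sq_nonneg z) (by positivity), Real.mul_rpow (by positivity) hz.le,
    ← Real.rpow_natCast z 2, ← Real.rpow_mul hz.le]
  rw [Real.rpow_neg (by positivity : (0:ℝ) ≤ 8 * τ), div_inv_eq_mul]
  have h1 : z * z ^ (((2:ℕ):ℝ) * -(1/4)) * z ^ (-(1/2):ℝ) = 1 := by
    rw [mul_assoc, ← Real.rpow_add hz,
      show (((2:ℕ):ℝ) * -(1/4) + -(1/2) : ℝ) = -1 by norm_num, Real.rpow_neg_one,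
      mul_inv_cancel₀ hz.ne']
  calc z * (z ^ (((2:ℕ):ℝ) * -(1/4)) * (8*τ) ^ ((1:ℝ)/4) * ((2*α) ^ (-(1/2):ℝ) * z ^ (-(1/2):ℝ)))
      = (z * z ^ (((2:ℕ):ℝ) * -(1/4)) * z ^ (-(1/2):ℝ)) * ((8*τ) ^ ((1:ℝ)/4) * (2*α) ^ (-(1/2):ℝ)) := by
        ring
    _ = _ := by rw [h1, one_mul]

lemma point_bound (α τ z : ℝ) (hα : 0 < α) (hτ : 0 < τ) (hz : 0 < z) :
    z * Real.exp (-z ^ 2 / (4 * τ) - 2 * α * z)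
      ≤ (8 * τ) ^ ((1:ℝ)/4) * (2 * α) ^ (-(1/2):ℝ) * Real.exp (-(1/(8*τ)) * z ^ 2) := by
  have hsplit : Real.exp (-z ^ 2 / (4 * τ) - 2 * α * z)
      = Real.exp (-(1/(8*τ)) * z ^ 2) * (Real.exp (-(z ^ 2 / (8 * τ))) * Real.exp (-(2 * α * z))) := by
    rw [← Real.exp_add, ← Real.exp_add]
    congr 1
    field_simp
    ring
  have h2 : Real.exp (-(z ^ 2 / (8 * τ))) ≤ (z ^ 2 / (8 * τ)) ^ (-(1/4):ℝ) :=
    exp_neg_le_rpow' (by norm_num) (by norm_num) (by positivity)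
  have h3 : Real.exp (-(2 * α * z)) ≤ (2 * α * z) ^ (-(1/2):ℝ) :=
    exp_neg_le_rpow' (by norm_num) (by norm_num) (by positivity)
  calc z * Real.exp (-z ^ 2 / (4 * τ) - 2 * α * z)
      = z * (Real.exp (-(z ^ 2 / (8 * τ))) * Real.exp (-(2 * α * z))) * Real.exp (-(1/(8*τ)) * z ^ 2) := by
        rw [hsplit]; ring
    _ ≤ z * ((z ^ 2 / (8 * τ)) ^ (-(1/4):ℝ) * (2 * α * z) ^ (-(1/2):ℝ)) * Real.exp (-(1/(8*τ)) * z ^ 2) := by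
        refine mul_le_mul_of_nonneg_right (mul_le_mul_of_nonneg_left ?_ hz.le) (Real.exp_pos _).le
        exact mul_le_mul h2 h3 (Real.exp_pos _).le (Real.rpow_nonneg (by positivity) _)
    _ = _ := by rw [alg' α τ z hα hτ hz]

lemma Falpha_nonneg (α τ : ℝ) (hτ : 0 < τ) : 0 ≤ Falpha α τ := by
  unfold Falpha
  apply mul_nonneg (by positivity)
  apply setIntegral_nonneg measurableSet_Ioi
  intro z hz
  have : (0:ℝ) < z := hz
  positivity

lemma Falpha_le (α τ : ℝ) (hα : 0 < α) (hτ : 0 < τ) :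
    Falpha α τ
      ≤ (1 / (2 * τ)) * ((8 * τ) ^ ((1:ℝ)/4) * (2 * α) ^ (-(1/2):ℝ)
          * (Real.sqrt (π / (1/(8*τ))) / 2)) := by
  unfold Falpha
  refine mul_le_mul_of_nonneg_left ?_ (by positivity)
  have hgi : Integrable (fun z : ℝ => (8 * τ) ^ ((1:ℝ)/4) * (2 * α) ^ (-(1/2):ℝ)
      * Real.exp (-(1/(8*τ)) * z ^ 2)) (volume.restrict (Set.Ioi 0)) :=
    (((integrable_exp_neg_mul_sq (by positivity : (0:ℝ) < 1/(8*τ))).const_mul _)).restrict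
  have h := integral_mono_of_nonneg (f := fun z : ℝ => z * Real.exp (-z ^ 2 / (4 * τ) - 2 * α * z))
    (μ := volume.restrict (Set.Ioi 0))
    ((ae_restrict_mem measurableSet_Ioi).mono fun z hz => by
      have : (0:ℝ) < z := hz; positivity)
    hgi
    ((ae_restrict_mem measurableSet_Ioi).mono fun z hz => point_bound α τ z hα hτ hz)
  refine h.trans_eq ?_
  rw [integral_const_mul, integral_gaussian_Ioi]

/-- The constant in the bound `F_α(τ)(4πτ)^{-1/2} ≤ K α^{-1/2} τ^{-3/4}`. -/
noncomputable def Kbd : ℝ :=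
  (1/2) * ((8:ℝ) ^ ((1:ℝ)/4) * (2:ℝ) ^ (-(1/2):ℝ) * (Real.sqrt (8*π) / 2)) * (Real.sqrt (4*π))⁻¹

lemma Kbd_nonneg : 0 ≤ Kbd := by unfold Kbd; positivity

lemma prod_bound (α τ : ℝ) (hα : 0 < α) (hτ : 0 < τ) :
    Falpha α τ * (Real.sqrt (4 * π * τ))⁻¹
      ≤ Kbd * α ^ (-(1/2):ℝ) * τ ^ (-(3/4):ℝ) := by
  have step := mul_le_mul_of_nonneg_right (Falpha_le α τ hα hτ)
    (inv_nonneg.2 (Real.sqrt_nonneg (4 * π * τ)))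
  refine step.trans_eq ?_
  have e1 : (8*τ) ^ ((1:ℝ)/4) = 8 ^ ((1:ℝ)/4) * τ ^ ((1:ℝ)/4) :=
    Real.mul_rpow (by norm_num) hτ.le
  have e2 : (2*α) ^ (-(1/2):ℝ) = 2 ^ (-(1/2):ℝ) * α ^ (-(1/2):ℝ) :=
    Real.mul_rpow (by norm_num) hα.le
  have e3 : Real.sqrt (π / (1/(8*τ))) = Real.sqrt (8*π) * τ ^ ((1:ℝ)/2) := by
    rw [show π / (1/(8*τ)) = (8*π) * τ by field_simp, Real.sqrt_mul (by positivity),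
      Real.sqrt_eq_rpow τ]
  have e4 : (Real.sqrt (4*π*τ))⁻¹ = (Real.sqrt (4*π))⁻¹ * τ ^ (-(1/2):ℝ) := by
    rw [Real.sqrt_mul (by positivity) τ, mul_inv, Real.sqrt_eq_rpow τ,
      ← Real.rpow_neg hτ.le]
  have e5 : (1/(2*τ)) = (1/2) * τ ^ (-(1:ℝ)) := by
    rw [Real.rpow_neg_one]; field_simp
  have htau : τ ^ (-(1:ℝ)) * τ ^ ((1:ℝ)/4) * τ ^ ((1:ℝ)/2) * τ ^ (-(1/2):ℝ) = τ ^ (-(3/4):ℝ) := by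
    rw [← Real.rpow_add hτ, ← Real.rpow_add hτ, ← Real.rpow_add hτ]
    norm_num
  rw [e1, e2, e3, e4, e5, Kbd]
  calc ((1/2) * τ ^ (-(1:ℝ))) * ((8:ℝ) ^ ((1:ℝ)/4) * τ ^ ((1:ℝ)/4) * ((2:ℝ) ^ (-(1/2):ℝ) * α ^ (-(1/2):ℝ))
        * (Real.sqrt (8*π) * τ ^ ((1:ℝ)/2) / 2)) * ((Real.sqrt (4*π))⁻¹ * τ ^ (-(1/2):ℝ))
      = ((1/2) * ((8:ℝ) ^ ((1:ℝ)/4) * (2:ℝ) ^ (-(1/2):ℝ) * (Real.sqrt (8*π) / 2)) * (Real.sqrt (4*π))⁻¹)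
        * α ^ (-(1/2):ℝ) * (τ ^ (-(1:ℝ)) * τ ^ ((1:ℝ)/4) * τ ^ ((1:ℝ)/2) * τ ^ (-(1/2):ℝ)) := by ring
    _ = _ := by rw [htau]

lemma inner_bound (α s : ℝ) (hα : 0 < α) (hs : 0 < s) :
    ‖∫ r in (0:ℝ)..s, Falpha α (s - r) * (Real.sqrt (4 * π * (s - r)))⁻¹‖
      ≤ Kbd * α ^ (-(1/2):ℝ) * (4 * s ^ ((1:ℝ)/4)) := by
  have h0 : IntervalIntegrable (fun x : ℝ => x ^ (-(3/4):ℝ)) volume 0 s :=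
    intervalIntegral.intervalIntegrable_rpow' (by norm_num)
  have hint : IntervalIntegrable
      (fun r => Kbd * α ^ (-(1/2):ℝ) * (s - r) ^ (-(3/4):ℝ)) volume 0 s := by
    have h1 := (h0.comp_sub_left s).symm
    simpa using h1.const_mul (Kbd * α ^ (-(1/2):ℝ))
  have hae : ∀ᵐ r ∂volume.restrict (Set.uIoc 0 s),
      ‖Falpha α (s - r) * (Real.sqrt (4 * π * (s - r)))⁻¹‖
        ≤ Kbd * α ^ (-(1/2):ℝ) * (s - r) ^ (-(3/4):ℝ) := by
    refine (ae_restrict_mem measurableSet_uIoc).mono fun r hr => ?_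
    rw [Set.uIoc_of_le hs.le] at hr
    rcases eq_or_lt_of_le hr.2 with h | h
    · subst h
      simp [Falpha]
    · have hsr : 0 < s - r := by linarith
      rw [Real.norm_of_nonneg (mul_nonneg (Falpha_nonneg α _ hsr)
        (inv_nonneg.2 (Real.sqrt_nonneg _)))]
      exact prod_bound α (s - r) hα hsr
  have hb := intervalIntegral.norm_integral_le_abs_of_norm_le hae hint
  refine hb.trans ?_
  have hval : (∫ r in (0:ℝ)..s, Kbd * α ^ (-(1/2):ℝ) * (s - r) ^ (-(3/4):ℝ))
      = Kbd * α ^ (-(1/2):ℝ) * (4 * s ^ ((1:ℝ)/4)) := by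
    rw [intervalIntegral.integral_const_mul,
      intervalIntegral.integral_comp_sub_left (fun x : ℝ => x ^ (-(3/4):ℝ)) s]
    simp only [sub_self, sub_zero]
    rw [integral_rpow (Or.inl (by norm_num))]
    rw [show (-(3/4) + 1 : ℝ) = 1/4 by norm_num, Real.zero_rpow (by norm_num : (1/4:ℝ) ≠ 0)]
    ring
  rw [hval, abs_of_nonneg (mul_nonneg (mul_nonneg Kbd_nonneg
    (Real.rpow_nonneg hα.le _)) (by positivity))]

/-- `lim_{α→∞} ∫₀^t ∫₀^s F_α(s−r)(4π(s−r))^{−1/2} dr ds = 0`; consequently the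
variance of the limiting occupation-time process `Γ_α` at the slow bond converges, as
`α → ∞`, to the variance `(4/3)(χ(ρ)/√π) t^{3/2}` of `Γ_∞`. -/
theorem variance_tendsto_atTop (t : ℝ) (ht : 0 < t) :
    Filter.Tendsto (fun α : ℝ => ∫ s in (0:ℝ)..t, ∫ r in (0:ℝ)..s,
        Falpha α (s - r) * (Real.sqrt (4 * Real.pi * (s - r)))⁻¹)
      Filter.atTop (nhds 0) ∧
    ∀ ρ ∈ Set.Icc (0:ℝ) 1,
      Filter.Tendsto (fun α : ℝ =>
          (4 / 3) * (ρ * (1 - ρ) / Real.sqrt Real.pi) * t ^ ((3:ℝ)/2)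
            + 2 * (ρ * (1 - ρ)) * ∫ s in (0:ℝ)..t, ∫ r in (0:ℝ)..s,
                Falpha α (s - r) * (Real.sqrt (4 * Real.pi * (s - r)))⁻¹)
        Filter.atTop
        (nhds ((4 / 3) * (ρ * (1 - ρ) / Real.sqrt Real.pi) * t ^ ((3:ℝ)/2))) := by
  have h1 : Filter.Tendsto (fun α : ℝ => ∫ s in (0:ℝ)..t, ∫ r in (0:ℝ)..s,
      Falpha α (s - r) * (Real.sqrt (4 * Real.pi * (s - r)))⁻¹)
      Filter.atTop (nhds 0) := by
    apply squeeze_zero_norm'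
      (a := fun α : ℝ => (Kbd * (4 * (t ^ ((5:ℝ)/4) / (5/4)))) * α ^ (-(1/2):ℝ))
    · filter_upwards [eventually_gt_atTop (0:ℝ)] with α hα
      have hint : IntervalIntegrable
          (fun s => Kbd * α ^ (-(1/2):ℝ) * (4 * s ^ ((1:ℝ)/4))) volume 0 t := by
        have h0 : IntervalIntegrable (fun x : ℝ => x ^ ((1:ℝ)/4)) volume 0 t :=
          intervalIntegral.intervalIntegrable_rpow' (by norm_num)
        have h1 := (h0.const_mul 4).const_mul (Kbd * α ^ (-(1/2):ℝ))
        simpa [mul_assoc] using h1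
      have hae : ∀ᵐ s ∂volume.restrict (Set.uIoc 0 t),
          ‖∫ r in (0:ℝ)..s, Falpha α (s - r) * (Real.sqrt (4 * π * (s - r)))⁻¹‖
            ≤ Kbd * α ^ (-(1/2):ℝ) * (4 * s ^ ((1:ℝ)/4)) := by
        refine (ae_restrict_mem measurableSet_uIoc).mono fun s hs => ?_
        rw [Set.uIoc_of_le ht.le] at hs
        exact inner_bound α s hα hs.1
      have hb := intervalIntegral.norm_integral_le_abs_of_norm_le hae hint
      refine hb.trans ?_
      have hval : (∫ s in (0:ℝ)..t, Kbd * α ^ (-(1/2):ℝ) * (4 * s ^ ((1:ℝ)/4)))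
          = (Kbd * (4 * (t ^ ((5:ℝ)/4) / (5/4)))) * α ^ (-(1/2):ℝ) := by
        rw [intervalIntegral.integral_const_mul]
        have : (∫ s in (0:ℝ)..t, 4 * s ^ ((1:ℝ)/4))
            = 4 * ((t ^ ((5:ℝ)/4) - 0 ^ ((5:ℝ)/4)) / (5/4)) := by
          rw [intervalIntegral.integral_const_mul, integral_rpow (Or.inl (by norm_num))]
          norm_num
        rw [this, Real.zero_rpow (by norm_num : ((5:ℝ)/4) ≠ 0)]
        ring
      rw [hval, abs_of_nonneg (mul_nonneg (mul_nonneg Kbd_nonneg (by positivity))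
        (Real.rpow_nonneg hα.le _))]
    · have := (tendsto_rpow_neg_atTop (by norm_num : (0:ℝ) < 1/2)).const_mul
        (Kbd * (4 * (t ^ ((5:ℝ)/4) / (5/4))))
      simpa [mul_zero] using this
  refine ⟨h1, fun ρ _ => ?_⟩
  have h2 := (h1.const_mul (2 * (ρ * (1 - ρ)))).const_add
    ((4 / 3) * (ρ * (1 - ρ) / Real.sqrt Real.pi) * t ^ ((3:ℝ)/2))
  simpa [mul_zero, add_zero] using h2
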